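/- arXiv:1802.05367 — 5 statements merged into one kernel-verified Lean document; each statement's English description precedes it below -/
import Mathlib

section
/- Let p be a prime, G a finite group, and Z a p-subgroup of the center of G. Let V be a finite-dimensional complex vector space with dim V = n, where p does not divide n, and let ρ : G → GL(V) be a representation such that every z ∈ Z acts on V as the scalar η(z), for a group homomorphism η : Z → ℂˣ. Then there exists a group homomorphism δ : G → ℂˣ whose restriction to Z equals η. -/
/-- The representation-theoretic content of Lemma 3 (after Murai): if `Z` is a central
`p`-subgroup of a finite group `G`, and `ρ : G → GL(V)` is a representation of dimension
`n` prime to `p` on which every `z ∈ Z` acts as the scalar `η(z)`, then the linear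
character `η` of `Z` extends to a linear character `δ` of `G`. -/
theorem exists_linear_extension_of_central_scalar_action
    {p : ℕ} (hp : p.Prime) {G : Type*} [Group G] [Finite G]
    (Z : Subgroup G) (hZc : Z ≤ Subgroup.center G) (hZp : IsPGroup p Z)
    {V : Type*} [AddCommGroup V] [Module ℂ V] [FiniteDimensional ℂ V]
    {n : ℕ} (hn : Module.finrank ℂ V = n) (hpn : ¬ p ∣ n)
    (ρ : G →* (V →ₗ[ℂ] V)ˣ) (η : Z →* ℂˣ)
    (hρ : ∀ z : Z, ∀ v : V, (ρ (z : G) : V →ₗ[ℂ] V) v = (η z : ℂ) • v) :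
    ∃ δ : G →* ℂˣ, ∀ z : Z, δ (z : G) = η z := by
  classical
  haveI : Fact p.Prime := ⟨hp⟩
  set q : ℕ := Nat.card Z with hq
  -- q is a power of p, so coprime to n
  haveI : NeZero q := ⟨Nat.card_pos.ne'⟩
  obtain ⟨k, hk⟩ := IsPGroup.iff_card.mp hZp
  have hcop : Nat.Coprime n q := by
    rw [hq, hk]
    exact (Nat.Coprime.pow_right k ((hp.coprime_iff_not_dvd.mpr hpn).symm))
  -- choose m with n * m ≡ 1 [MOD q]
  let u : (ZMod q)ˣ := ZMod.unitOfCoprime n hcop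
  set m : ℕ := ((u⁻¹ : (ZMod q)ˣ) : ZMod q).val with hm
  have hmod : n * m ≡ 1 [MOD q] := by
    have : ((n * m : ℕ) : ZMod q) = ((1 : ℕ) : ZMod q) := by
      push_cast
      rw [hm, ZMod.natCast_val, ZMod.cast_id]
      have : ((n : ZMod q)) = (u : ZMod q) := by simp [u, ZMod.coe_unitOfCoprime]
      rw [this]
      exact_mod_cast u.mul_inv
    exact (ZMod.natCast_eq_natCast_iff _ _ _).mp this
  -- determinant character
  let δ : G →* ℂˣ := ((Units.map (LinearMap.det : (V →ₗ[ℂ] V) →* ℂ)).comp ρ) ^ m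
  refine ⟨δ, fun z => ?_⟩
  -- compute det (ρ z) = (η z)^n
  have hdet : (Units.map (LinearMap.det : (V →ₗ[ℂ] V) →* ℂ)) (ρ (z : G)) = (η z) ^ n := by
    ext
    have hlin : ((ρ (z : G) : V →ₗ[ℂ] V)) = (η z : ℂ) • (LinearMap.id : V →ₗ[ℂ] V) := by
      apply LinearMap.ext
      intro v
      simpa using hρ z v
    simp only [Units.coe_map, MonoidHom.coe_coe, hlin, LinearMap.det_smul, hn,
      LinearMap.det_id, mul_one, Units.val_pow_eq_pow_val]
  have hzq : η z ^ q = 1 := by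
    rw [← map_pow]
    have : z ^ q = 1 := pow_card_eq_one'
    rw [this, map_one]
  have horder : orderOf (η z) ∣ q := orderOf_dvd_of_pow_eq_one hzq
  have hδz : δ (z : G) = (η z) ^ (n * m) := by
    simp only [δ, MonoidHom.pow_apply, MonoidHom.comp_apply, hdet, ← pow_mul]
  rw [hδz]
  have : (η z) ^ (n * m) = (η z) ^ 1 :=
    pow_eq_pow_iff_modEq.mpr (hmod.of_dvd horder)
  simpa using this
end

section
/- Let P be a finite group and let σ = (Q₀ < Q₁ < ⋯ < Q_m) be a normal chain of subgroups of P, i.e., each Qᵢ is normal in Q_m. Let N_P(σ) = ⋂_{i=0}^{m} N_P(Qᵢ) denote the common normalizer of the terms of σ, and suppose Q_m is a proper subgroup of N_P(σ). Then the extended tuple σ⁺ = (Q₀ < Q₁ < ⋯ < Q_m < N_P(σ)) is again a normal chain (every term is normal in the last term N_P(σ)), and N_P(σ⁺) = N_P(σ). -/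
/-- The chain obtained from `σ = (Q₀ < ⋯ < Q_m)` by appending the common normalizer
`N_P(σ) = ⋂ᵢ N_P(Qᵢ)` as a new last term. -/
def appendNormalizer {P : Type*} [Group P] {m : ℕ} (Q : Fin (m + 1) → Subgroup P) :
    Fin (m + 2) → Subgroup P :=
  Fin.snoc Q (⨅ i, Subgroup.normalizer (Q i : Set P))

/-- If `σ = (Q₀ < ⋯ < Q_m)` is a normal chain of subgroups of a finite group `P`
(each `Qᵢ` normal in `Q_m`) with `Q_m` properly contained in the common normalizer
`N_P(σ) = ⋂ᵢ N_P(Qᵢ)`, then the extended tuple `σ⁺ = (Q₀ < ⋯ < Q_m < N_P(σ))` is again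
a normal chain (every term normal in its last term), and `N_P(σ⁺) = N_P(σ)`. -/
theorem append_normalizer_is_normal_chain
    {P : Type*} [Group P] [Finite P] {m : ℕ}
    (Q : Fin (m + 1) → Subgroup P) (hmono : StrictMono Q)
    (hnorm : ∀ i, Q (Fin.last m) ≤ Subgroup.normalizer (Q i : Set P))
    (hlt : Q (Fin.last m) < ⨅ i, Subgroup.normalizer (Q i : Set P)) :
    StrictMono (appendNormalizer Q) ∧
    (∀ j : Fin (m + 2),
      appendNormalizer Q (Fin.last (m + 1)) ≤ Subgroup.normalizer (appendNormalizer Q j : Set P)) ∧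
    ⨅ j, Subgroup.normalizer (appendNormalizer Q j : Set P) = ⨅ i, Subgroup.normalizer (Q i : Set P) := by
  have hlast : appendNormalizer Q (Fin.last (m + 1)) = ⨅ i, Subgroup.normalizer (Q i : Set P) := by
    simp [appendNormalizer]
  have hcast : ∀ i : Fin (m + 1), appendNormalizer Q i.castSucc = Q i := by
    intro i; simp [appendNormalizer]
  refine ⟨?_, ?_, ?_⟩
  · intro a b hab
    induction b using Fin.lastCases with
    | last =>
      induction a using Fin.lastCases with
      | last => exact absurd hab (lt_irrefl _)
      | cast a =>
        rw [hlast, hcast]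
        exact lt_of_le_of_lt (hmono.monotone (Fin.le_last a)) hlt
    | cast b =>
      induction a using Fin.lastCases with
      | last => exact absurd (lt_of_le_of_lt (Fin.le_last _) hab) (lt_irrefl _)
      | cast a =>
        rw [hcast, hcast]
        exact hmono (by simpa using hab)
  · intro j
    rw [hlast]
    induction j using Fin.lastCases with
    | last => rw [hlast]; exact Subgroup.le_normalizer
    | cast j => rw [hcast]; exact iInf_le _ j
  · apply le_antisymm
    · refine le_iInf fun i => ?_
      have := iInf_le (fun j => Subgroup.normalizer (appendNormalizer Q j : Set P)) i.castSucc
      rwa [hcast] at this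
    · refine le_iInf fun j => ?_
      induction j using Fin.lastCases with
      | last => rw [hlast]; exact Subgroup.le_normalizer
      | cast j => rw [hcast]; exact iInf_le _ j
end

section
/- Let p be a prime, P a finite p-group, and σ = (Q₀ < Q₁ < ⋯ < Q_m) a normal chain of subgroups of P (each Qᵢ normal in Q_m) with m ≥ 1. Suppose Q_m = N_P(σ), where N_P(σ) = ⋂_{i=0}^{m} N_P(Qᵢ). Then the truncated chain σ⁻ = (Q₀ < Q₁ < ⋯ < Q_{m-1}) satisfies N_P(σ⁻) = Q_m. -/
/-- If `σ = (Q₀ < ⋯ < Q_m)` (with `m ≥ 1`) is a normal chain of subgroups of a finite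
`p`-group `P` (each `Qᵢ` normal in `Q_m`) whose last term equals its common normalizer
`N_P(σ) = ⋂ᵢ N_P(Qᵢ)`, then the truncated chain `σ⁻ = (Q₀ < ⋯ < Q_{m-1})` satisfies
`N_P(σ⁻) = Q_m`. -/
theorem truncated_chain_normalizer
    {p : ℕ} (hp : p.Prime) {P : Type*} [Group P] [Finite P] (hP : IsPGroup p P)
    {m : ℕ} (hm : 1 ≤ m)
    (Q : Fin (m + 1) → Subgroup P) (hmono : StrictMono Q)
    (hnorm : ∀ i, Q (Fin.last m) ≤ Subgroup.normalizer (Q i : Set P))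
    (hself : Q (Fin.last m) = ⨅ i, Subgroup.normalizer (Q i : Set P)) :
    ⨅ i : Fin m, Subgroup.normalizer (Q i.castSucc : Set P) = Q (Fin.last m) := by
  set N : Subgroup P := ⨅ i : Fin m, Subgroup.normalizer (Q i.castSucc : Set P) with hN
  have hQN : Q (Fin.last m) ≤ N := le_iInf fun i => hnorm _
  refine le_antisymm ?_ hQN
  by_contra hlt'
  have hlt : Q (Fin.last m) < N := lt_of_le_of_ne hQN (fun h => hlt' h.ge)
  haveI : Fact p.Prime := ⟨hp⟩
  have hPN : IsPGroup p N := hP.to_subgroup N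
  haveI : Group.IsNilpotent N := hPN.isNilpotent
  have hnc : NormalizerCondition N := normalizerCondition_of_isNilpotent
  set H : Subgroup N := (Q (Fin.last m)).subgroupOf N with hH
  have hHtop : H < ⊤ := by
    rw [lt_top_iff_ne_top]
    intro h
    have hNle : N ≤ Q (Fin.last m) := by
      intro x hx
      have : (⟨x, hx⟩ : N) ∈ H := h ▸ Subgroup.mem_top _
      simpa [hH, Subgroup.mem_subgroupOf] using this
    exact absurd (le_antisymm hQN hNle) hlt.ne
  obtain ⟨x, hxn, hxH⟩ := SetLike.exists_of_lt (hnc H hHtop)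
  have hxQ : (x : P) ∈ Subgroup.normalizer (Q (Fin.last m) : Set P) := by
    rw [Subgroup.mem_normalizer_iff]
    intro h
    constructor
    · intro hh
      have hhN : h ∈ N := hQN hh
      have := (Subgroup.mem_normalizer_iff.mp hxn ⟨h, hhN⟩).mp
        (by simpa [hH, Subgroup.mem_subgroupOf] using hh)
      simpa [hH, Subgroup.mem_subgroupOf] using this
    · intro hh
      have hhN : h ∈ N := by
        have h1 : (x : P) * h * (x : P)⁻¹ ∈ N := hQN hh
        have h2 := N.mul_mem (N.mul_mem (N.inv_mem x.2) h1) x.2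
        have : (x : P)⁻¹ * ((x : P) * h * (x : P)⁻¹) * (x : P) = h := by group
        rwa [this] at h2
      have := (Subgroup.mem_normalizer_iff.mp hxn ⟨h, hhN⟩).mpr
        (by simpa [hH, Subgroup.mem_subgroupOf] using hh)
      simpa [hH, Subgroup.mem_subgroupOf] using this
  have hxAll : (x : P) ∈ ⨅ i, Subgroup.normalizer (Q i : Set P) := by
    rw [Subgroup.mem_iInf]
    intro i
    induction i using Fin.lastCases with
    | last => exact hxQ
    | cast i =>
      exact Subgroup.mem_iInf.mp
        (show (x : P) ∈ ⨅ i : Fin m, Subgroup.normalizer (Q i.castSucc : Set P) from x.2) i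
  rw [← hself] at hxAll
  exact hxH (by simpa [hH, Subgroup.mem_subgroupOf] using hxAll)
end

section
/- Let p be a prime and P a nontrivial finite p-group. On the set S of normal chains σ = (Q₀ < Q₁ < ⋯ < Q_m) of nontrivial subgroups of P, define a map n as follows: n fixes the chain (P) of length 0; for σ ≠ (P), if Q_m = N_P(σ) then n(σ) is obtained by removing the last term Q_m, and if Q_m < N_P(σ) then n(σ) is obtained by appending N_P(σ) as a new last term. Then n is well defined (in particular, if σ ≠ (P) and Q_m = N_P(σ) then m ≥ 1, and n(σ) is again a normal chain of nontrivial subgroups), n(n(σ)) = σ for all σ ∈ S, and the lengths satisfy |n(σ)| = |σ| ± 1 for all σ ≠ (P). -/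
/-- A normal chain `σ = (Q₀ < Q₁ < ⋯ < Q_m)` of nontrivial subgroups of a group `P`:
a strictly increasing tuple of nontrivial subgroups, each normal in the last term.
The field `len` is the length `m` of the chain. -/
structure NormalChain (P : Type*) [Group P] where
  len : ℕ
  Q : Fin (len + 1) → Subgroup P
  strictMono : StrictMono Q
  nontriv : ∀ i, Q i ≠ ⊥
  normal : ∀ i, Q (Fin.last len) ≤ Subgroup.normalizer (Q i : Set P)

/-- The normalizer `N_P(σ) = ⋂ᵢ N_P(Qᵢ)` of a normal chain. -/
def NormalChain.norm {P : Type*} [Group P] (σ : NormalChain P) : Subgroup P :=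
  ⨅ i, Subgroup.normalizer (σ.Q i : Set P)

/-- The length-zero chain `(P)` consisting of the whole group. -/
def NormalChain.top (P : Type*) [Group P] [Nontrivial P] : NormalChain P where
  len := 0
  Q := fun _ => ⊤
  strictMono := by
    intro i j h
    rw [Fin.lt_def] at h
    exact absurd h (by omega)
  nontriv := fun _ => top_ne_bot
  normal := fun _ => Subgroup.le_normalizer

namespace NormalChain

variable {P : Type*} [Group P]

/-- Extensionality for normal chains. -/
theorem ext' {σ τ : NormalChain P} (hlen : σ.len = τ.len)
    (hQ : ∀ (i : ℕ) (h1 : i < σ.len + 1) (h2 : i < τ.len + 1),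
      σ.Q ⟨i, h1⟩ = τ.Q ⟨i, h2⟩) : σ = τ := by
  obtain ⟨l, Q, hm, hn, hnor⟩ := σ
  obtain ⟨l', Q', hm', hn', hnor'⟩ := τ
  dsimp at hlen hQ
  subst hlen
  have hQQ : Q = Q' := funext fun i => by
    rcases i with ⟨i, hi⟩; exact hQ i hi hi
  subst hQQ
  rfl

theorem Q_congr {σ τ : NormalChain P} (h : σ = τ) {i : Fin (σ.len + 1)}
    {j : Fin (τ.len + 1)} (hij : (i : ℕ) = (j : ℕ)) : σ.Q i = τ.Q j := by
  subst h
  congr 1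
  exact Fin.ext hij

theorem last_le_norm (σ : NormalChain P) : σ.Q (Fin.last σ.len) ≤ σ.norm :=
  le_iInf σ.normal

theorem norm_le (σ : NormalChain P) (i : Fin (σ.len + 1)) :
    σ.norm ≤ Subgroup.normalizer (σ.Q i : Set P) :=
  iInf_le _ i

/-- Truncation: remove the last term of a chain of positive length. -/
def trunc (σ : NormalChain P) (h1 : 1 ≤ σ.len) : NormalChain P where
  len := σ.len - 1
  Q := fun i => σ.Q ⟨(i : ℕ), by have := i.isLt; omega⟩
  strictMono := by
    intro i j hij
    exact σ.strictMono (Fin.mk_lt_mk.mpr (Fin.lt_def.mp hij))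
  nontriv := fun i => σ.nontriv _
  normal := by
    intro i
    refine le_trans (le_of_lt (σ.strictMono (a := ⟨σ.len - 1, by omega⟩)
      (b := Fin.last σ.len) ?_)) (σ.normal _)
    rw [Fin.lt_def]
    simp only [Fin.val_last]
    omega

@[simp] theorem trunc_len (σ : NormalChain P) (h1 : 1 ≤ σ.len) :
    (σ.trunc h1).len = σ.len - 1 := rfl

theorem trunc_Q (σ : NormalChain P) (h1 : 1 ≤ σ.len) (i : Fin (σ.len - 1 + 1))
    (h : (i : ℕ) < σ.len + 1) : (σ.trunc h1).Q i = σ.Q ⟨(i : ℕ), h⟩ := rfl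

theorem trunc_Q' (σ : NormalChain P) (h1 : 1 ≤ σ.len) (i : ℕ)
    (hi : i < σ.len - 1 + 1) (h : i < σ.len + 1) :
    (σ.trunc h1).Q ⟨i, hi⟩ = σ.Q ⟨i, h⟩ := rfl

theorem last_le_norm_trunc (σ : NormalChain P) (h1 : 1 ≤ σ.len) :
    σ.Q (Fin.last σ.len) ≤ (σ.trunc h1).norm :=
  le_iInf fun _ => σ.normal _

theorem trunc_last_lt_norm (σ : NormalChain P) (h1 : 1 ≤ σ.len) :
    (σ.trunc h1).Q (Fin.last (σ.trunc h1).len) < (σ.trunc h1).norm := by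
  refine lt_of_lt_of_le ?_ (σ.last_le_norm_trunc h1)
  show σ.Q ⟨σ.len - 1, _⟩ < σ.Q (Fin.last σ.len)
  apply σ.strictMono
  rw [Fin.lt_def]
  simp only [Fin.val_last]
  omega

/-- Extension: append the normalizer of the chain as a new last term. -/
def extend (σ : NormalChain P) (h : σ.Q (Fin.last σ.len) < σ.norm) : NormalChain P where
  len := σ.len + 1
  Q := fun i => if hi : (i : ℕ) < σ.len + 1 then σ.Q ⟨(i : ℕ), hi⟩ else σ.norm
  strictMono := by
    intro i j hij
    rw [Fin.lt_def] at hij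
    show (if hi : (i : ℕ) < σ.len + 1 then σ.Q ⟨(i : ℕ), hi⟩ else σ.norm)
      < (if hj : (j : ℕ) < σ.len + 1 then σ.Q ⟨(j : ℕ), hj⟩ else σ.norm)
    by_cases hj : (j : ℕ) < σ.len + 1
    · have hi : (i : ℕ) < σ.len + 1 := by omega
      rw [dif_pos hi, dif_pos hj]
      exact σ.strictMono (Fin.mk_lt_mk.mpr hij)
    · have hi : (i : ℕ) < σ.len + 1 := by have := j.isLt; omega
      rw [dif_pos hi, dif_neg hj]
      refine lt_of_le_of_lt ?_ h
      refine σ.strictMono.monotone ?_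
      rw [Fin.le_def]
      simp only [Fin.val_last]
      omega
  nontriv := by
    intro i
    show (if hi : (i : ℕ) < σ.len + 1 then σ.Q ⟨(i : ℕ), hi⟩ else σ.norm) ≠ ⊥
    by_cases hi : (i : ℕ) < σ.len + 1
    · rw [dif_pos hi]; exact σ.nontriv _
    · rw [dif_neg hi]
      exact fun hb => σ.nontriv (Fin.last σ.len) (le_bot_iff.mp (hb ▸ h.le))
  normal := by
    intro i
    have hlast : ¬ ((Fin.last (σ.len + 1) : ℕ) < σ.len + 1) := by
      simp only [Fin.val_last]; omega
    show (if hl : ((Fin.last (σ.len + 1) : Fin (σ.len + 1 + 1)) : ℕ) < σ.len + 1 then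
        σ.Q ⟨((Fin.last (σ.len + 1) : Fin (σ.len + 1 + 1)) : ℕ), hl⟩ else σ.norm)
      ≤ Subgroup.normalizer (((if hi : (i : ℕ) < σ.len + 1 then σ.Q ⟨(i : ℕ), hi⟩ else σ.norm) : Subgroup P) : Set P)
    rw [dif_neg hlast]
    by_cases hi : (i : ℕ) < σ.len + 1
    · rw [dif_pos hi]; exact σ.norm_le _
    · rw [dif_neg hi]; exact Subgroup.le_normalizer

@[simp] theorem extend_len (σ : NormalChain P) (h : σ.Q (Fin.last σ.len) < σ.norm) :
    (σ.extend h).len = σ.len + 1 := rfl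

theorem extend_Q_lt (σ : NormalChain P) (h : σ.Q (Fin.last σ.len) < σ.norm)
    (i : Fin (σ.len + 1 + 1)) (hi : (i : ℕ) < σ.len + 1) :
    (σ.extend h).Q i = σ.Q ⟨(i : ℕ), hi⟩ := dif_pos hi

theorem extend_Q_lt' (σ : NormalChain P) (h : σ.Q (Fin.last σ.len) < σ.norm)
    (i : ℕ) (h1 : i < σ.len + 1 + 1) (hi : i < σ.len + 1) :
    (σ.extend h).Q ⟨i, h1⟩ = σ.Q ⟨i, hi⟩ := dif_pos hi

theorem extend_Q_last (σ : NormalChain P) (h : σ.Q (Fin.last σ.len) < σ.norm) :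
    (σ.extend h).Q (Fin.last ((σ.extend h).len)) = σ.norm :=
  dif_neg (by simp only [Fin.val_last, extend_len]; omega)

theorem extend_norm (σ : NormalChain P) (h : σ.Q (Fin.last σ.len) < σ.norm) :
    (σ.extend h).norm = σ.norm := by
  refine le_antisymm (le_iInf fun i => ?_) (le_iInf fun j => ?_)
  · have h2 := (σ.extend h).norm_le ⟨(i : ℕ), by
      have := i.isLt; rw [extend_len]; omega⟩
    erw [σ.extend_Q_lt' h (i : ℕ) _ i.isLt, Fin.eta] at h2; exact h2
  · by_cases hj : (j : ℕ) < σ.len + 1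
    · rw [σ.extend_Q_lt h _ hj]; exact σ.norm_le _
    · rw [show (σ.extend h).Q j = σ.norm from dif_neg hj]
      exact Subgroup.le_normalizer

/-- In a finite `p`-group, a subgroup that is self-normalizing inside `K` equals `K`. -/
theorem selfnorm_aux {p : ℕ} (hp : p.Prime) {P : Type*} [Group P] [Finite P]
    (hP : IsPGroup p P) {Q K : Subgroup P} (hQK : Q ≤ K)
    (hself : Subgroup.normalizer (Q : Set P) ⊓ K ≤ Q) : K ≤ Q := by
  haveI : Fact p.Prime := ⟨hp⟩
  haveI : Group.IsNilpotent K := (hP.to_subgroup K).isNilpotent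
  have hnc := normalizerCondition_of_isNilpotent (G := K)
  rw [normalizerCondition_iff_only_full_group_self_normalizing] at hnc
  have htop : Q.subgroupOf K = ⊤ := by
    apply hnc
    refine le_antisymm ?_ Subgroup.le_normalizer
    intro x hx
    have hxN : (x : P) ∈ Subgroup.normalizer (Q : Set P) := by
      rw [Subgroup.mem_normalizer_iff]
      intro g
      constructor
      · intro hg
        have := (Subgroup.mem_normalizer_iff.mp hx ⟨g, hQK hg⟩).mp
          (by simpa [Subgroup.mem_subgroupOf] using hg)
        simpa [Subgroup.mem_subgroupOf] using this
      · intro hg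
        have hgK : g ∈ K := by
          have hrw : g = (x : P)⁻¹ * ((x : P) * g * (x : P)⁻¹) * (x : P) := by group
          rw [hrw]
          exact mul_mem (mul_mem (inv_mem x.2) (hQK hg)) x.2
        have := (Subgroup.mem_normalizer_iff.mp hx ⟨g, hgK⟩).mpr
          (by simpa [Subgroup.mem_subgroupOf] using hg)
        simpa [Subgroup.mem_subgroupOf] using this
    exact Subgroup.mem_subgroupOf.mpr (hself ⟨hxN, x.2⟩)
  exact Subgroup.subgroupOf_eq_top.mp htop

theorem eq_top_of_len_zero {p : ℕ} (hp : p.Prime) {P : Type*} [Group P] [Finite P]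
    [Nontrivial P] (hP : IsPGroup p P) (σ : NormalChain P) (h0 : σ.len = 0)
    (heq : σ.Q (Fin.last σ.len) = σ.norm) : σ = NormalChain.top P := by
  have hall : ∀ i : Fin (σ.len + 1), i = Fin.last σ.len := fun i =>
    Fin.ext (by have := i.isLt; simp only [Fin.val_last]; omega)
  have hnorm : σ.norm = Subgroup.normalizer (σ.Q (Fin.last σ.len) : Set P) := by
    refine le_antisymm (σ.norm_le _) (le_iInf fun i => by rw [hall i])
  have htop : σ.Q (Fin.last σ.len) = ⊤ := by
    refine le_antisymm le_top (selfnorm_aux hp hP le_top ?_)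
    rw [inf_top_eq, ← hnorm, ← heq]
  refine ext' (by simp [h0, NormalChain.top]) fun i hi1 hi2 => ?_
  rw [hall ⟨i, hi1⟩, htop]
  rfl

theorem norm_trunc {p : ℕ} (hp : p.Prime) {P : Type*} [Group P] [Finite P]
    (hP : IsPGroup p P) (σ : NormalChain P) (h1 : 1 ≤ σ.len)
    (heq : σ.Q (Fin.last σ.len) = σ.norm) :
    (σ.trunc h1).norm = σ.Q (Fin.last σ.len) := by
  refine le_antisymm ?_ (σ.last_le_norm_trunc h1)
  refine selfnorm_aux hp hP (σ.last_le_norm_trunc h1) ?_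
  conv_rhs => rw [heq]
  refine le_iInf fun i => ?_
  by_cases hi : (i : ℕ) < σ.len
  · have h2 := (σ.trunc h1).norm_le ⟨(i : ℕ), by rw [trunc_len]; omega⟩
    erw [σ.trunc_Q' h1 (i : ℕ) _ (by omega), Fin.eta] at h2
    exact le_trans (inf_le_right (a := Subgroup.normalizer (σ.Q (Fin.last σ.len) : Set P))
      (b := (σ.trunc h1).norm)) h2
  · have hil : i = Fin.last σ.len :=
      Fin.ext (by have := i.isLt; simp only [Fin.val_last]; omega)
    rw [hil]
    exact inf_le_left

/-- The involution on normal chains. -/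
noncomputable def nmap (σ : NormalChain P) : NormalChain P :=
  haveI := Classical.dec (σ.Q (Fin.last σ.len) < σ.norm)
  if h : σ.Q (Fin.last σ.len) < σ.norm then σ.extend h
  else if h1 : 1 ≤ σ.len then σ.trunc h1 else σ

theorem nmap_of_lt (σ : NormalChain P) (h : σ.Q (Fin.last σ.len) < σ.norm) :
    σ.nmap = σ.extend h := by
  unfold nmap
  rw [dif_pos h]

theorem nmap_of_eq_pos (σ : NormalChain P) (heq : σ.Q (Fin.last σ.len) = σ.norm)
    (h1 : 1 ≤ σ.len) : σ.nmap = σ.trunc h1 := by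
  unfold nmap
  rw [dif_neg (by rw [heq]; exact lt_irrefl _), dif_pos h1]

theorem nmap_of_eq_zero (σ : NormalChain P) (heq : σ.Q (Fin.last σ.len) = σ.norm)
    (h0 : σ.len = 0) : σ.nmap = σ := by
  unfold nmap
  rw [dif_neg (by rw [heq]; exact lt_irrefl _), dif_neg (by omega)]

end NormalChain

/-- For a nontrivial finite `p`-group `P`, there is a well-defined involution `n` on the
set of normal chains of nontrivial subgroups of `P`: it fixes the chain `(P)`; for
`σ ≠ (P)`, if the last term `Q_m` equals `N_P(σ)` then `n σ` removes the last term
(in particular `m ≥ 1` in this case), and if `Q_m < N_P(σ)` then `n σ` appends `N_P(σ)`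
as a new last term. Moreover `n (n σ) = σ` and `|n σ| = |σ| ± 1` for all `σ ≠ (P)`. -/
theorem exists_normal_chain_involution
    {p : ℕ} (hp : p.Prime) {P : Type*} [Group P] [Finite P] [Nontrivial P]
    (hP : IsPGroup p P) :
    ∃ n : NormalChain P → NormalChain P,
      n (NormalChain.top P) = NormalChain.top P ∧
      (∀ σ : NormalChain P, σ ≠ NormalChain.top P →
        σ.Q (Fin.last σ.len) = σ.norm →
          1 ≤ σ.len ∧ (n σ).len + 1 = σ.len ∧
          ∀ (i : Fin ((n σ).len + 1)) (h : (i : ℕ) < σ.len + 1),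
            (n σ).Q i = σ.Q ⟨i, h⟩) ∧
      (∀ σ : NormalChain P, σ.Q (Fin.last σ.len) < σ.norm →
          (n σ).len = σ.len + 1 ∧
          (∀ (i : Fin (σ.len + 1)) (h : (i : ℕ) < (n σ).len + 1),
            (n σ).Q ⟨i, h⟩ = σ.Q i) ∧
          (n σ).Q (Fin.last (n σ).len) = σ.norm) ∧
      (∀ σ : NormalChain P, n (n σ) = σ) ∧
      (∀ σ : NormalChain P, σ ≠ NormalChain.top P →
        (n σ).len = σ.len + 1 ∨ (n σ).len + 1 = σ.len) := by
  classical
  have hdich : ∀ σ : NormalChain P,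
      σ.Q (Fin.last σ.len) < σ.norm ∨ σ.Q (Fin.last σ.len) = σ.norm := fun σ =>
    lt_or_eq_of_le σ.last_le_norm
  have hpos : ∀ σ : NormalChain P, σ ≠ NormalChain.top P →
      σ.Q (Fin.last σ.len) = σ.norm → 1 ≤ σ.len := by
    intro σ hne heq
    by_contra h0
    exact hne (NormalChain.eq_top_of_len_zero hp hP σ (by omega) heq)
  refine ⟨NormalChain.nmap, ?_, ?_, ?_, ?_, ?_⟩
  · have heq : (NormalChain.top P).Q (Fin.last (NormalChain.top P).len)
        = (NormalChain.top P).norm :=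
      le_antisymm (NormalChain.last_le_norm _) le_top
    exact NormalChain.nmap_of_eq_zero _ heq rfl
  · intro σ hne heq
    have h1 : 1 ≤ σ.len := hpos σ hne heq
    have hn : σ.nmap = σ.trunc h1 := NormalChain.nmap_of_eq_pos σ heq h1
    have hl : σ.nmap.len = σ.len - 1 := by rw [hn, NormalChain.trunc_len]
    refine ⟨h1, by omega, ?_⟩
    intro i h
    have hi' : (i : ℕ) < σ.len - 1 + 1 := by have := i.isLt; omega
    rw [NormalChain.Q_congr hn (j := ⟨(i : ℕ), hi'⟩) rfl]
    exact σ.trunc_Q' h1 _ _ h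
  · intro σ hlt
    have hn : σ.nmap = σ.extend hlt := NormalChain.nmap_of_lt σ hlt
    have hl : σ.nmap.len = σ.len + 1 := by rw [hn, NormalChain.extend_len]
    refine ⟨hl, ?_, ?_⟩
    · intro i h
      have hi' : (i : ℕ) < σ.len + 1 + 1 := by omega
      rw [NormalChain.Q_congr hn (i := ⟨(i : ℕ), h⟩) (j := ⟨(i : ℕ), hi'⟩) rfl,
        σ.extend_Q_lt' hlt _ _ i.isLt, Fin.eta]
    · rw [NormalChain.Q_congr hn (j := Fin.last ((σ.extend hlt).len))
        (by simp only [Fin.val_last]; rw [hl]; rfl)]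
      exact σ.extend_Q_last hlt
  · intro σ
    rcases hdich σ with hlt | heq
    · have hn : σ.nmap = σ.extend hlt := NormalChain.nmap_of_lt σ hlt
      have heq' : (σ.extend hlt).Q (Fin.last ((σ.extend hlt).len))
          = (σ.extend hlt).norm := by
        rw [σ.extend_Q_last hlt, σ.extend_norm hlt]
      have h1' : 1 ≤ (σ.extend hlt).len := by rw [NormalChain.extend_len]; omega
      rw [hn, NormalChain.nmap_of_eq_pos _ heq' h1']
      refine NormalChain.ext' (by rfl) ?_
      intro i hi1 hi2
      have hi3 : i < σ.len + 1 + 1 := by omega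
      rw [(σ.extend hlt).trunc_Q' h1' i hi1 hi3, σ.extend_Q_lt' hlt _ _ hi2]
    · by_cases h0 : σ.len = 0
      · rw [NormalChain.nmap_of_eq_zero σ heq h0, NormalChain.nmap_of_eq_zero σ heq h0]
      · have h1 : 1 ≤ σ.len := by omega
        have hn : σ.nmap = σ.trunc h1 := NormalChain.nmap_of_eq_pos σ heq h1
        have hlt' : (σ.trunc h1).Q (Fin.last ((σ.trunc h1).len)) < (σ.trunc h1).norm :=
          σ.trunc_last_lt_norm h1
        rw [hn, NormalChain.nmap_of_lt _ hlt']
        refine NormalChain.ext' (by rw [NormalChain.extend_len, NormalChain.trunc_len]; omega) ?_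
        intro i hi1 hi2
        by_cases hi : i < σ.len - 1 + 1
        · rw [(σ.trunc h1).extend_Q_lt' hlt' i hi1 hi, σ.trunc_Q' h1 i hi hi2]
        · rw [show ((σ.trunc h1).extend hlt').Q ⟨i, hi1⟩ = (σ.trunc h1).norm from
            dif_neg hi, NormalChain.norm_trunc hp hP σ h1 heq]
          congr 1
          exact Fin.ext (by simp only [Fin.val_last]; omega)
  · intro σ hne
    rcases hdich σ with hlt | heq
    · left
      rw [NormalChain.nmap_of_lt σ hlt, NormalChain.extend_len]
    · right
      have h1 : 1 ≤ σ.len := hpos σ hne heq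
      rw [NormalChain.nmap_of_eq_pos σ heq h1, NormalChain.trunc_len]
      omega
end

section
/- Let p be a prime and P a nontrivial finite p-group. Let S be the (finite) set of normal chains of nontrivial subgroups of P, and let n : S → S be the involution that fixes the chain (P) and otherwise removes the last term Q_m when Q_m = N_P(σ) and appends N_P(σ) when Q_m < N_P(σ). If f : S → ℤ satisfies f(n(σ)) = f(σ) for all σ ∈ S, then ∑_{σ ∈ S} (-1)^{|σ|} f(σ) = f((P)), where |σ| denotes the length of the chain σ. -/
theorem pgrp_exists_normalizer {p : ℕ} (hp : p.Prime) {P : Type*} [Group P] [Finite P]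
    (hP : IsPGroup p P) {H K : Subgroup P} (hHK : H < K) :
    ∃ x, x ∈ K ∧ x ∈ Subgroup.normalizer (H : Set P) ∧ x ∉ H := by
  haveI : Fact p.Prime := ⟨hp⟩
  have hK : IsPGroup p K := hP.to_subgroup K
  haveI := hK.isNilpotent
  have hnc := normalizerCondition_of_isNilpotent (G := K)
  have h1 : H.subgroupOf K < ⊤ := by
    rw [lt_top_iff_ne_top]
    intro h
    rw [Subgroup.subgroupOf_eq_top] at h
    exact hHK.ne (le_antisymm hHK.le h)
  obtain ⟨x, hx1, hx2⟩ := SetLike.exists_of_lt (hnc _ h1)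
  rw [Subgroup.mem_normalizer_iff] at hx1
  refine ⟨(x : P), x.2, ?_, fun hxH => hx2 (Subgroup.mem_subgroupOf.mpr hxH)⟩
  rw [Subgroup.mem_normalizer_iff]
  intro g
  constructor
  · intro hg
    have hgK : g ∈ K := hHK.le hg
    have := (hx1 ⟨g, hgK⟩).mp (Subgroup.mem_subgroupOf.mpr hg)
    rw [Subgroup.mem_subgroupOf] at this
    simpa using this
  · intro hg
    have hgK : g ∈ K := by
      have h2 : (x : P)⁻¹ * ((x : P) * g * (x : P)⁻¹) * (x : P) ∈ K :=
        mul_mem (mul_mem (inv_mem x.2) (hHK.le hg)) x.2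
      simpa [mul_assoc] using h2
    have := (hx1 ⟨g, hgK⟩).mpr (by rw [Subgroup.mem_subgroupOf]; simpa using hg)
    rw [Subgroup.mem_subgroupOf] at this
    simpa using this

theorem pgrp_eq_of_inf {p : ℕ} (hp : p.Prime) {P : Type*} [Group P] [Finite P]
    (hP : IsPGroup p P) {H K : Subgroup P} (hHK : H ≤ K)
    (h : K ⊓ Subgroup.normalizer (H : Set P) ≤ H) : K = H := by
  by_contra hne
  obtain ⟨x, hxK, hxN, hxH⟩ := pgrp_exists_normalizer hp hP (lt_of_le_of_ne hHK (Ne.symm hne))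
  exact hxH (h ⟨hxK, hxN⟩)

namespace NormalChain
variable {P : Type*} [Group P]

theorem top_len [Nontrivial P] {σ : NormalChain P} (h : σ = NormalChain.top P) : σ.len = 0 := by
  subst h; rfl

theorem top_Q [Nontrivial P] {σ : NormalChain P} (h : σ = NormalChain.top P)
    (h0 : (0 : ℕ) < σ.len + 1) : σ.Q ⟨0, h0⟩ = ⊤ := by
  subst h; rfl

end NormalChain


/-- The cancellation principle (the paper's Lemma 5) for the set `S` of normal chains of
nontrivial subgroups of a nontrivial finite `p`-group `P`: if `n : S → S` is the
involution fixing the chain `(P)` and otherwise removing the last term `Q_m` when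
`Q_m = N_P(σ)` and appending `N_P(σ)` when `Q_m < N_P(σ)`, then for every `f : S → ℤ`
with `f (n σ) = f σ` one has `∑_{σ ∈ S} (-1)^{|σ|} f σ = f (P)`.  (The set `S` is
finite, and the sum is the finite sum `∑ᶠ` over all of `S`.) -/
theorem alternating_sum_over_normal_chains
    {p : ℕ} (hp : p.Prime) {P : Type*} [Group P] [Finite P] [Nontrivial P]
    (hP : IsPGroup p P)
    (n : NormalChain P → NormalChain P)
    (hntop : n (NormalChain.top P) = NormalChain.top P)
    (hremove : ∀ σ : NormalChain P, σ ≠ NormalChain.top P →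
      σ.Q (Fin.last σ.len) = σ.norm →
        (n σ).len + 1 = σ.len ∧
        ∀ (i : Fin ((n σ).len + 1)) (h : (i : ℕ) < σ.len + 1),
          (n σ).Q i = σ.Q ⟨i, h⟩)
    (happend : ∀ σ : NormalChain P, σ.Q (Fin.last σ.len) < σ.norm →
        (n σ).len = σ.len + 1 ∧
        (∀ (i : Fin (σ.len + 1)) (h : (i : ℕ) < (n σ).len + 1),
          (n σ).Q ⟨i, h⟩ = σ.Q i) ∧
        (n σ).Q (Fin.last (n σ).len) = σ.norm)
    (f : NormalChain P → ℤ) (hf : ∀ σ : NormalChain P, f (n σ) = f σ) :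
    ∑ᶠ σ : NormalChain P, (-1 : ℤ) ^ σ.len * f σ = f (NormalChain.top P) := by
  classical
  -- Finiteness of the set of normal chains
  have hfin : Finite (NormalChain P) := by
    haveI hSfin : Finite (Subgroup P) := inferInstance
    have hlenlt : ∀ σ : NormalChain P, σ.len < Nat.card (Subgroup P) := by
      intro σ
      have h1 : Nat.card (Fin (σ.len + 1)) ≤ Nat.card (Subgroup P) :=
        Nat.card_le_card_of_injective _ σ.strictMono.injective
      simpa using h1
    refine Finite.of_injective
      (fun (σ : NormalChain P) =>
        ((fun (i : Fin (Nat.card (Subgroup P))) =>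
          if h : (i : ℕ) < σ.len + 1 then σ.Q ⟨i, h⟩ else ⊤),
         (⟨σ.len, hlenlt σ⟩ : Fin (Nat.card (Subgroup P))))) ?_
    intro σ τ h
    have hlen : σ.len = τ.len := by
      have := congrArg Prod.snd h
      simpa using congrArg Fin.val this
    refine NormalChain.ext' hlen ?_
    intro i hi1 hi2
    have e := congrFun (congrArg Prod.fst h) ⟨i, by have := hlenlt σ; omega⟩
    simpa only [dif_pos (show ((⟨i, by have := hlenlt σ; omega⟩ :
      Fin (Nat.card (Subgroup P))) : ℕ) < σ.len + 1 from hi1),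
      dif_pos (show ((⟨i, by have := hlenlt σ; omega⟩ :
      Fin (Nat.card (Subgroup P))) : ℕ) < τ.len + 1 from hi2)] using e
  haveI := Fintype.ofFinite (NormalChain P)
  -- The key properties of the involution
  have key : ∀ σ : NormalChain P, σ ≠ NormalChain.top P →
      n σ ≠ NormalChain.top P ∧ n (n σ) = σ ∧
        ((n σ).len + 1 = σ.len ∨ (n σ).len = σ.len + 1) := by
    intro σ hne
    rcases lt_or_eq_of_le σ.last_le_norm with hlt | heq
    · -- append case
      obtain ⟨hlen, hQ, hlast⟩ := happend σ hlt
      have hne' : n σ ≠ NormalChain.top P := fun h => by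
        have := NormalChain.top_len h; omega
      have hnorm : (n σ).norm = σ.norm := by
        apply le_antisymm
        · refine le_iInf fun i : Fin (σ.len + 1) => ?_
          have e : (n σ).Q ⟨(i : ℕ), by omega⟩ = σ.Q i := hQ i (by omega)
          have h2 := iInf_le (fun j => Subgroup.normalizer ((n σ).Q j : Set P))
            (⟨(i : ℕ), by omega⟩ : Fin ((n σ).len + 1))
          rwa [e] at h2
        · refine le_iInf fun j : Fin ((n σ).len + 1) => ?_
          by_cases hj : (j : ℕ) < σ.len + 1
          · have e : (n σ).Q j = σ.Q ⟨(j : ℕ), hj⟩ := hQ ⟨(j : ℕ), hj⟩ j.isLt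
            rw [e]
            exact iInf_le _ _
          · have hjl : j = Fin.last ((n σ).len) := by
              apply Fin.ext
              have := j.isLt
              simp only [Fin.val_last]
              omega
            rw [hjl, hlast]
            exact Subgroup.le_normalizer
      have hQlast : (n σ).Q (Fin.last (n σ).len) = (n σ).norm := by rw [hlast, hnorm]
      obtain ⟨hlen2, hQ2⟩ := hremove (n σ) hne' hQlast
      have hnn : n (n σ) = σ := by
        refine NormalChain.ext' (by omega) ?_
        intro i hi1 hi2
        have e1 : (n (n σ)).Q ⟨i, hi1⟩ = (n σ).Q ⟨i, by omega⟩ := hQ2 ⟨i, hi1⟩ (by omega)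
        have e2 : (n σ).Q ⟨i, by omega⟩ = σ.Q ⟨i, hi2⟩ := hQ ⟨i, hi2⟩ (by omega)
        rw [e1, e2]
      exact ⟨hne', hnn, Or.inr hlen⟩
    · -- remove case
      obtain ⟨hlen, hQ⟩ := hremove σ hne heq
      have h1 : σ.norm ≤ (n σ).norm := by
        refine le_iInf fun i : Fin ((n σ).len + 1) => ?_
        have e : (n σ).Q i = σ.Q ⟨(i : ℕ), by omega⟩ := hQ i (by omega)
        rw [e]
        exact iInf_le _ _
      have h2 : (n σ).norm ⊓ Subgroup.normalizer (σ.Q (Fin.last σ.len) : Set P) ≤ σ.norm := by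
        refine le_iInf fun j : Fin (σ.len + 1) => ?_
        by_cases hj : (j : ℕ) < (n σ).len + 1
        · refine inf_le_left.trans ?_
          have h3 := iInf_le (fun i => Subgroup.normalizer ((n σ).Q i : Set P))
            (⟨(j : ℕ), hj⟩ : Fin ((n σ).len + 1))
          have e : (n σ).Q ⟨(j : ℕ), hj⟩ = σ.Q j := hQ ⟨(j : ℕ), hj⟩ j.isLt
          rwa [e] at h3
        · have hjl : j = Fin.last σ.len := by
            apply Fin.ext
            have := j.isLt
            simp only [Fin.val_last]
            omega
          rw [hjl]
          exact inf_le_right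
      have hK : (n σ).norm = σ.Q (Fin.last σ.len) := by
        refine pgrp_eq_of_inf hp hP ?_ ?_
        · rw [heq]; exact h1
        · exact h2.trans heq.ge
      have hne' : n σ ≠ NormalChain.top P := by
        intro h
        have h0 : (n σ).len = 0 := NormalChain.top_len h
        have p1 : (0 : ℕ) < (n σ).len + 1 := by omega
        have p2 : (0 : ℕ) < σ.len + 1 := by omega
        have e1 : (n σ).Q ⟨0, p1⟩ = σ.Q ⟨0, p2⟩ := hQ ⟨0, p1⟩ p2
        have e2 : (n σ).Q ⟨0, p1⟩ = ⊤ := NormalChain.top_Q h p1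
        have e : σ.Q ⟨0, p2⟩ = ⊤ := e1.symm.trans e2
        have hlt2 : σ.Q ⟨0, p2⟩ < σ.Q (Fin.last σ.len) := σ.strictMono (by
          rw [Fin.lt_def]
          simp only [Fin.val_last]
          omega)
        rw [e] at hlt2
        exact not_top_lt hlt2
      have hlt' : (n σ).Q (Fin.last (n σ).len) < (n σ).norm := by
        rw [hK]
        have e : (n σ).Q (Fin.last (n σ).len) = σ.Q ⟨(n σ).len, by omega⟩ :=
          hQ (Fin.last (n σ).len) (by simp only [Fin.val_last]; omega)
        rw [e]
        exact σ.strictMono (by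
          rw [Fin.lt_def]
          simp only [Fin.val_last]
          omega)
      obtain ⟨hlen2, hQ2, hlast2⟩ := happend (n σ) hlt'
      have hnn : n (n σ) = σ := by
        refine NormalChain.ext' (by omega) ?_
        intro i hi1 hi2
        by_cases hi : i < (n σ).len + 1
        · have e1 : (n (n σ)).Q ⟨i, hi1⟩ = (n σ).Q ⟨i, hi⟩ := hQ2 ⟨i, hi⟩ (by omega)
          have e2 : (n σ).Q ⟨i, hi⟩ = σ.Q ⟨i, hi2⟩ := hQ ⟨i, hi⟩ (by omega)
          rw [e1, e2]
        · have e3 : (⟨i, hi1⟩ : Fin ((n (n σ)).len + 1)) = Fin.last ((n (n σ)).len) := by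
            apply Fin.ext
            simp only [Fin.val_last]
            omega
          rw [e3, hlast2, hK]
          have e4 : Fin.last σ.len = ⟨i, hi2⟩ := by
            apply Fin.ext
            simp only [Fin.val_last]
            omega
          rw [e4]
      exact ⟨hne', hnn, Or.inl hlen⟩
  -- The alternating sum
  rw [finsum_eq_sum_of_fintype]
  rw [← Finset.add_sum_erase _ _ (Finset.mem_univ (NormalChain.top P))]
  have hrest : ∑ σ ∈ Finset.univ.erase (NormalChain.top P), (-1 : ℤ) ^ σ.len * f σ = 0 := by
    refine Finset.sum_involution (fun σ _ => n σ) ?_ ?_ ?_ ?_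
    · intro σ hσ
      obtain ⟨-, -, hpar⟩ := key σ (Finset.ne_of_mem_erase hσ)
      rw [hf σ]
      rcases hpar with h | h
      · rw [← h, pow_succ]; ring
      · rw [h, pow_succ]; ring
    · intro σ hσ _
      obtain ⟨-, -, hpar⟩ := key σ (Finset.ne_of_mem_erase hσ)
      intro heq2
      have hlev : (n σ).len = σ.len := congrArg NormalChain.len heq2
      rcases hpar with h | h <;> omega
    · intro σ hσ
      obtain ⟨h1, -, -⟩ := key σ (Finset.ne_of_mem_erase hσ)
      exact Finset.mem_erase.mpr ⟨h1, Finset.mem_univ _⟩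
    · intro σ hσ
      exact (key σ (Finset.ne_of_mem_erase hσ)).2.1
  rw [hrest]
  show (-1 : ℤ) ^ (0 : ℕ) * f (NormalChain.top P) + 0 = f (NormalChain.top P)
  ring
end
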